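/- arXiv:2502.16155 — 2 statements merged into one kernel-verified Lean document; each statement's English description precedes it below -/
import Mathlib

section
/- Let L be a principally generated C-lattice that is a lattice domain, and let a, x, y ∈ L be nonzero with x, y principal and x ≤ a, y ≤ a. Then (x : (x : a)) = (y : (y : a)). -/
/-- A multiplicative lattice: a complete lattice (bottom `⊥` playing the role of `0`)
which is a commutative monoid whose identity `1` is the top element, and in which
multiplication distributes over arbitrary joins. -/
class MulLattice (L : Type*) extends CompleteLattice L, CommMonoid L where
  one_eq_top : (1 : L) = ⊤
  mul_sSup : ∀ (a : L) (S : Set L), a * sSup S = ⨆ b ∈ S, a * b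

namespace MulLattice

variable {L : Type*} [MulLattice L]

/-- The residual `(y : x) = ⋁ {a | a * x ≤ y}`. -/
def res (y x : L) : L := sSup {a : L | a * x ≤ y}

/-- `x` is meet-principal: `y ⊓ z * x = ((y : x) ⊓ z) * x` for all `y, z`. -/
def IsMeetPrincipal (x : L) : Prop := ∀ y z : L, y ⊓ z * x = (res y x ⊓ z) * x

/-- `x` is join-principal: `y ⊔ (z : x) = ((y * x ⊔ z) : x)` for all `y, z`. -/
def IsJoinPrincipal (x : L) : Prop := ∀ y z : L, y ⊔ res z x = res (y * x ⊔ z) x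

/-- `x` is principal if it is both meet-principal and join-principal. -/
def IsPrincipal (x : L) : Prop := IsMeetPrincipal x ∧ IsJoinPrincipal x

/-- A prime element: a proper element `p` with `x * y ≤ p → x ≤ p ∨ y ≤ p`. -/
def IsPrime (p : L) : Prop := p ≠ 1 ∧ ∀ x y : L, x * y ≤ p → x ≤ p ∨ y ≤ p

/-- A maximal element: an element maximal in `L - {1}`. -/
def IsMaximal (m : L) : Prop := m ≠ 1 ∧ ∀ b : L, m < b → b = 1

end MulLattice

/-- A principally generated C-lattice: a multiplicative lattice in which `1` is compact,
compact elements are closed under multiplication, every element is a join of compact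
elements and every element is a join of principal elements. -/
class PGCLattice (L : Type*) extends MulLattice L where
  top_isCompact : IsCompactElement (⊤ : L)
  compact_mul : ∀ a b : L, IsCompactElement a →
    IsCompactElement b → IsCompactElement (a * b)
  compactly_generated : ∀ a : L,
    a = sSup {c : L | IsCompactElement c ∧ c ≤ a}
  principally_generated : ∀ a : L,
    a = sSup {x : L | MulLattice.IsPrincipal x ∧ x ≤ a}

namespace MulLattice

variable {L : Type*}

/-- A lattice domain: `0 = ⊥` is a prime element. -/
def IsLatticeDomain (L : Type*) [MulLattice L] : Prop := IsPrime (⊥ : L)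

variable [PGCLattice L]

open Classical in
/-- The divisorial (`v`-)closure of `a`: equals `(x : (x : a))` for a nonzero principal
`x ≤ a` when such an `x` exists (in a lattice domain this is independent of the choice
of `x`), and `⊥` otherwise (in particular `vclos ⊥ = ⊥`). -/
noncomputable def vclos (a : L) : L :=
  if h : ∃ x : L, IsPrincipal x ∧ x ≠ ⊥ ∧ x ≤ a then
    res h.choose (res h.choose a)
  else ⊥

/-- `a` is divisorial if `a = a_v`. -/
def IsDivisorial (a : L) : Prop := vclos a = a

/-- `L` is h-local: every nonzero prime is below a unique maximal element and
every nonzero element is below only finitely many maximal elements. -/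
def IsHLocal (L : Type*) [PGCLattice L] : Prop :=
  (∀ r : L, r ≠ ⊥ → IsPrime r → ∃! m : L, IsMaximal m ∧ r ≤ m) ∧
  (∀ b : L, b ≠ ⊥ → {m : L | IsMaximal m ∧ b ≤ m}.Finite)

end MulLattice

open MulLattice

section Aux

variable {L : Type*} [MulLattice L]

lemma aux_mul_mono_right (a : L) {b c : L} (h : b ≤ c) : a * b ≤ a * c := by
  have key : a * sSup ({b, c} : Set L) = ⨆ d ∈ ({b, c} : Set L), a * d :=
    MulLattice.mul_sSup a {b, c}
  have h1 : sSup ({b, c} : Set L) = c := by rw [sSup_pair, sup_eq_right.mpr h]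
  rw [h1] at key
  rw [key]
  exact le_iSup₂ (f := fun d _ => a * d) b (Set.mem_insert b {c})

lemma aux_le_one (a : L) : a ≤ 1 := by
  rw [MulLattice.one_eq_top]; exact le_top

lemma aux_mul_le_right (a b : L) : a * b ≤ b := by
  calc a * b = b * a := mul_comm a b
    _ ≤ b * 1 := aux_mul_mono_right b (aux_le_one a)
    _ = b := mul_one b

lemma aux_res_mul_le (c p : L) : res c p * p ≤ c := by
  rw [mul_comm, res, MulLattice.mul_sSup]
  apply iSup₂_le
  intro d hd
  rw [mul_comm]
  exact hd

lemma aux_le_res_iff {t c p : L} : t ≤ res c p ↔ t * p ≤ c := by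
  constructor
  · intro h
    calc t * p = p * t := mul_comm t p
      _ ≤ p * res c p := aux_mul_mono_right p h
      _ = res c p * p := mul_comm p (res c p)
      _ ≤ c := aux_res_mul_le c p
  · intro h
    exact le_sSup h

lemma aux_res_bot (hL : IsLatticeDomain L) {p : L} (hp0 : p ≠ ⊥) :
    res (⊥ : L) p = ⊥ := by
  rw [res]
  apply le_bot_iff.mp
  apply sSup_le
  intro d hd
  have : d * p ≤ ⊥ := hd
  rcases hL.2 d p this with h | h
  · exact h
  · exact absurd (le_bot_iff.mp h) hp0

lemma aux_res_mul_self (hL : IsLatticeDomain L) {p : L} (hp : IsPrincipal p)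
    (hp0 : p ≠ ⊥) (c : L) : res (c * p) p = c := by
  have := hp.2 c ⊥
  rw [aux_res_bot hL hp0, sup_bot_eq, sup_bot_eq] at this
  exact this.symm

lemma aux_cancel (hL : IsLatticeDomain L) {p : L} (hp : IsPrincipal p)
    (hp0 : p ≠ ⊥) {t c : L} (h : t * p ≤ c * p) : t ≤ c := by
  have : t ≤ res (c * p) p := aux_le_res_iff.mpr h
  rwa [aux_res_mul_self hL hp hp0 c] at this

lemma aux_res_res_mul (hL : IsLatticeDomain L) {p : L} (hp : IsPrincipal p)
    (hp0 : p ≠ ⊥) (c d : L) : res (c * p) (d * p) = res c d := by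
  apply le_antisymm
  · apply aux_le_res_iff.mpr
    apply aux_cancel hL hp hp0 (c := c)
    have : res (c * p) (d * p) * (d * p) ≤ c * p := aux_res_mul_le _ _
    calc res (c * p) (d * p) * d * p = res (c * p) (d * p) * (d * p) := mul_assoc _ _ _
      _ ≤ c * p := this
  · apply aux_le_res_iff.mpr
    calc res c d * (d * p) = res c d * d * p := (mul_assoc _ _ _).symm
      _ ≤ c * p := by
          rw [mul_comm (res c d * d) p, mul_comm c p]
          exact aux_mul_mono_right p (aux_res_mul_le c d)

/-- Key lemma: for principal nonzero `x, y ≤ a`, `res (x*y) a = y * res x a`. -/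
lemma aux_key (hL : IsLatticeDomain L) {a x y : L}
    (hx : IsPrincipal x) (hy : IsPrincipal y) (hx0 : x ≠ ⊥) (hy0 : y ≠ ⊥)
    (hxa : x ≤ a) (hya : y ≤ a) : res (x * y) a = y * res x a := by
  apply le_antisymm
  · apply sSup_le
    intro t ht
    have hta : t * a ≤ x * y := ht
    -- t ≤ y
    have hty : t ≤ y := by
      apply aux_cancel hL hx hx0 (c := y)
      calc t * x ≤ t * a := aux_mul_mono_right t hxa
        _ ≤ x * y := hta
        _ = y * x := mul_comm x y
    -- meet-principal of y with z = 1 : t ⊓ y = res t y * y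
    have hmp := hy.1 t 1
    rw [one_mul, MulLattice.one_eq_top, inf_top_eq, inf_eq_left.mpr hty] at hmp
    -- so t = res t y * y
    set s := res t y with hs
    have hst : s * y = t := hmp.symm
    have hsa : s * a ≤ x := by
      apply aux_cancel hL hy hy0 (c := x)
      calc s * a * y = s * y * a := mul_right_comm s a y
        _ = t * a := by rw [hst]
        _ ≤ x * y := hta
    have : s ≤ res x a := aux_le_res_iff.mpr hsa
    calc t = s * y := hst.symm
      _ = y * s := mul_comm s y
      _ ≤ y * res x a := aux_mul_mono_right y this
  · apply aux_le_res_iff.mpr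
    calc y * res x a * a = y * (res x a * a) := mul_assoc _ _ _
      _ ≤ y * x := aux_mul_mono_right y (aux_res_mul_le x a)
      _ = x * y := mul_comm y x

end Aux

theorem stmt1 {L : Type*} [PGCLattice L] (hL : IsLatticeDomain L)
    (a x y : L) (ha : a ≠ ⊥) (hx0 : x ≠ ⊥) (hy0 : y ≠ ⊥)
    (hx : IsPrincipal x) (hy : IsPrincipal y) (hxa : x ≤ a) (hya : y ≤ a) :
    res x (res x a) = res y (res y a) := by
  have hxy : res (x * y) a = y * res x a := aux_key hL hx hy hx0 hy0 hxa hya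
  have hyx : res (x * y) a = x * res y a := by
    rw [mul_comm x y]
    exact aux_key hL hy hx hy0 hx0 hya hxa
  have h1 : res (x * y) (res (x * y) a) = res x (res x a) := by
    rw [hxy, mul_comm y (res x a)]
    exact aux_res_res_mul hL hy hy0 x (res x a)
  have h2 : res (x * y) (res (x * y) a) = res y (res y a) := by
    rw [hyx, mul_comm x (res y a), mul_comm x y]
    exact aux_res_res_mul hL hx hx0 y (res y a)
  rw [← h1, h2]
end

section
/- Let L be a divisorial principally generated C-lattice lattice domain, let (a_i)_{i∈I} be a nonempty family of elements of L, and let x ≤ ⋀_{i∈I} a_i be a nonzero principal element. Then (x : ⋀_{i∈I} a_i) = ⋁_{i∈I} (x : a_i). -/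
open MulLattice

section Aux

variable {L : Type*} [MulLattice L]

lemma myMul_le_mul_right {a b : L} (c : L) (h : a ≤ b) : a * c ≤ b * c := by
  have hs : c * sSup {a, b} = ⨆ y ∈ ({a, b} : Set L), c * y := MulLattice.mul_sSup c {a, b}
  have h1 : sSup ({a, b} : Set L) = b := by
    rw [sSup_pair, sup_eq_right.mpr h]
  have h2 : (⨆ y ∈ ({a, b} : Set L), c * y) = c * a ⊔ c * b :=
    iSup_pair
  rw [h1, h2] at hs
  calc a * c = c * a := mul_comm a c
    _ ≤ c * a ⊔ c * b := le_sup_left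
    _ = c * b := hs.symm
    _ = b * c := mul_comm c b

lemma myMul_le_mul_left {a b : L} (c : L) (h : a ≤ b) : c * a ≤ c * b := by
  rw [mul_comm c a, mul_comm c b]; exact myMul_le_mul_right c h

lemma res_mul_le (y x : L) : res y x * x ≤ y := by
  have hs : x * sSup {a : L | a * x ≤ y} = ⨆ b ∈ {a : L | a * x ≤ y}, x * b :=
    MulLattice.mul_sSup x _
  rw [res, mul_comm, hs]
  exact iSup_le fun b => iSup_le fun hb => by rw [mul_comm]; exact hb

lemma le_res_iff {z x y : L} : z ≤ res y x ↔ z * x ≤ y := by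
  constructor
  · intro h
    exact le_trans (myMul_le_mul_right x h) (res_mul_le y x)
  · intro h
    exact le_sSup h

lemma res_anti {y b c : L} (h : b ≤ c) : res y c ≤ res y b := by
  apply sSup_le
  intro z hz
  exact le_sSup (le_trans (myMul_le_mul_left z h) hz)

lemma mul_le_self (a b : L) : a * b ≤ a := by
  have : a * b ≤ a * 1 := myMul_le_mul_left a (by rw [MulLattice.one_eq_top]; exact le_top)
  simpa using this

lemma le_res_self (x a : L) : x ≤ res x a := le_res_iff.mpr (mul_le_self x a)

lemma res_bot_eq_bot (hdom : IsLatticeDomain L) {x : L} (hx0 : x ≠ ⊥) :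
    res (⊥ : L) x = ⊥ := by
  apply sSup_eq_bot.mpr
  intro a ha
  rcases hdom.2 a x ha with h | h
  · exact le_bot_iff.mp h
  · exact absurd (le_bot_iff.mp h) hx0

/-- Cancellation: for nonzero principal `x` in a domain, `z * x ≤ w * x → z ≤ w`. -/
lemma cancel_right (hdom : IsLatticeDomain L) {x : L} (hx : IsPrincipal x) (hx0 : x ≠ ⊥)
    {z w : L} (h : z * x ≤ w * x) : z ≤ w := by
  have hjp := hx.2 w ⊥
  rw [res_bot_eq_bot hdom hx0, sup_bot_eq, sup_bot_eq] at hjp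
  rw [hjp]
  exact le_res_iff.mpr h

/-- For principal `x` and `y ≤ x`, `y = (y : x) * x`. -/
lemma eq_res_mul (hx : IsPrincipal x) {y : L} (hy : y ≤ x) : y = res y x * x := by
  have hmp := hx.1 y 1
  rw [one_mul, MulLattice.one_eq_top, inf_top_eq, inf_eq_left.mpr hy] at hmp
  exact hmp

/-- Independence of the divisorial closure from the choice of principal element. -/
lemma indep (hdom : IsLatticeDomain L) {p q a : L}
    (hp : IsPrincipal p) (hp0 : p ≠ ⊥) (hq : IsPrincipal q) (hq0 : q ≠ ⊥)
    (hpa : p ≤ a) (hqa : q ≤ a) : res p (res p a) ≤ res q (res q a) := by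
  set A := res p (res p a) with hA
  -- (q:a) * p ≤ q
  have h1 : res q a * p ≤ q :=
    le_trans (myMul_le_mul_left _ hpa) (res_mul_le q a)
  -- (q:a) * p = u * q with u = ((q:a)*p : q)
  set u := res (res q a * p) q with hu
  have h2 : res q a * p = u * q := eq_res_mul hq h1
  -- u * a ≤ p
  have h3 : u * a ≤ p := by
    apply cancel_right hdom hq hq0
    calc (u * a) * q = (u * q) * a := by ac_rfl
      _ ≤ (res q a * p) * a := myMul_le_mul_right a h2.ge
      _ = (res q a * a) * p := by ac_rfl
      _ ≤ q * p := myMul_le_mul_right p (res_mul_le q a)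
      _ = p * q := mul_comm q p
  have h4 : u ≤ res p a := le_res_iff.mpr h3
  -- A * (q:a) ≤ q
  apply le_res_iff.mpr
  apply cancel_right hdom hp hp0
  calc (A * res q a) * p = A * (res q a * p) := by ac_rfl
    _ = A * (u * q) := by rw [h2]
    _ = (A * u) * q := by ac_rfl
    _ ≤ (A * res p a) * q := myMul_le_mul_right q (myMul_le_mul_left A h4)
    _ ≤ p * q := myMul_le_mul_right q (res_mul_le p (res p a))
    _ = q * p := mul_comm p q

end Aux

section Aux2

variable {L : Type*} [PGCLattice L]

lemma vclos_eq (hdom : IsLatticeDomain L) {x a : L}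
    (hx : IsPrincipal x) (hx0 : x ≠ ⊥) (hxa : x ≤ a) :
    vclos a = res x (res x a) := by
  have hex : ∃ y : L, IsPrincipal y ∧ y ≠ ⊥ ∧ y ≤ a := ⟨x, hx, hx0, hxa⟩
  rw [vclos, dif_pos hex]
  obtain ⟨hy, hy0, hya⟩ := hex.choose_spec
  exact le_antisymm (indep hdom hy hy0 hx hx0 hya hxa)
    (indep hdom hx hx0 hy hy0 hxa hya)

lemma res_res_eq (hdom : IsLatticeDomain L) (hdiv : ∀ b : L, IsDivisorial b) {x a : L}
    (hx : IsPrincipal x) (hx0 : x ≠ ⊥) (hxa : x ≤ a) :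
    res x (res x a) = a := by
  rw [← vclos_eq hdom hx hx0 hxa]
  exact hdiv a

end Aux2

theorem stmt11 {L : Type*} [PGCLattice L] (hL : IsLatticeDomain L)
    (hdiv : ∀ a : L, IsDivisorial a)
    {ι : Type*} [Nonempty ι] (a : ι → L) (x : L)
    (hx0 : x ≠ ⊥) (hx : IsPrincipal x) (hxa : x ≤ ⨅ i, a i) :
    res x (⨅ i, a i) = ⨆ i, res x (a i) := by
  set s : L := ⨆ i, res x (a i) with hs
  have hxai : ∀ i, x ≤ a i := fun i => le_trans hxa (iInf_le a i)
  -- x ≤ s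
  have hxs : x ≤ s := by
    obtain ⟨i⟩ := ‹Nonempty ι›
    rw [hs]
    exact le_trans (le_res_self x (a i)) (le_iSup (fun j => res x (a j)) i)
  -- res x s = ⨅ i, a i
  have key : res x s = ⨅ i, a i := by
    apply le_antisymm
    · apply le_iInf
      intro i
      rw [← res_res_eq hL hdiv hx hx0 (hxai i)]
      exact res_anti (le_iSup (fun j => res x (a j)) i)
    · apply le_res_iff.mpr
      have hms : (⨅ i, a i) * s = ⨆ b ∈ Set.range (fun i => res x (a i)), (⨅ i, a i) * b := by
        rw [hs, iSup]
        exact MulLattice.mul_sSup _ _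
      rw [hms]
      apply iSup_le; intro b; apply iSup_le; rintro ⟨i, rfl⟩
      calc (⨅ j, a j) * res x (a i) ≤ a i * res x (a i) :=
            myMul_le_mul_right _ (iInf_le a i)
        _ = res x (a i) * a i := mul_comm _ _
        _ ≤ x := res_mul_le x (a i)
  calc res x (⨅ i, a i) = res x (res x s) := by rw [key]
    _ = s := res_res_eq hL hdiv hx hx0 hxs
end
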